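/- Let L be an invertible linear operator on ℂ^{n₁} ⊗ ⋯ ⊗ ℂ^{n_p} mapping elementary tensors to multiples of elementary tensors. If a, b are elementary tensors differing on exactly r tensor factors (i.e., aᵢ ∥ bᵢ for all but exactly r indices i), then La and Lb, written as multiples of elementary tensors, differ on at most r tensor factors. -/

import Mathlib

noncomputable section

/-- The elementary tensor `a₁ ⊗ ⋯ ⊗ a_p` in `ℂ^{n₁} ⊗ ⋯ ⊗ ℂ^{n_p}`. -/
def tensP {p : ℕ} {n : Fin p → ℕ} (a : ∀ i, EuclideanSpace ℂ (Fin (n i))) :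
    EuclideanSpace ℂ (∀ i, Fin (n i)) :=
  WithLp.toLp 2 (fun f : (∀ i, Fin (n i)) => ∏ i, a i (f i))

/-- Two vectors are parallel (linearly dependent) if one is a scalar multiple of the
other. -/
def Par {N : ℕ} (x y : EuclideanSpace ℂ (Fin N)) : Prop :=
  ∃ c : ℂ, y = c • x ∨ x = c • y

section Aux

lemma exists_coord_ne_zero {N : ℕ} {x : EuclideanSpace ℂ (Fin N)} (hx : x ≠ 0) :
    ∃ m, x m ≠ 0 := by
  by_contra hc
  push_neg at hc
  exact hx (by ext m; exact hc m)

lemma par_of_minors {N : ℕ} {x y : EuclideanSpace ℂ (Fin N)}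
    (h : ∀ s t, x s * y t = x t * y s) : Par x y := by
  by_cases hx : x = 0
  · exact ⟨0, Or.inr (by simp [hx])⟩
  · obtain ⟨s₀, hs₀⟩ := exists_coord_ne_zero hx
    refine ⟨y s₀ / x s₀, Or.inl ?_⟩
    ext t
    rw [PiLp.smul_apply, smul_eq_mul, div_mul_eq_mul_div, eq_div_iff hs₀]
    linear_combination - h t s₀

lemma par_symm {N : ℕ} {x y : EuclideanSpace ℂ (Fin N)} (h : Par x y) : Par y x := by
  obtain ⟨c, hc⟩ := h
  exact ⟨c, hc.symm⟩

lemma par_right {N : ℕ} {x y : EuclideanSpace ℂ (Fin N)} (hx : x ≠ 0) (h : Par x y) :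
    ∃ c : ℂ, y = c • x := by
  obtain ⟨c, hc | hc⟩ := h
  · exact ⟨c, hc⟩
  · have hc0 : c ≠ 0 := by rintro rfl; rw [zero_smul] at hc; exact hx hc
    exact ⟨c⁻¹, by rw [hc, smul_smul, inv_mul_cancel₀ hc0, one_smul]⟩

lemma par_trans_mid {N : ℕ} {x m y : EuclideanSpace ℂ (Fin N)} (hm : m ≠ 0)
    (h1 : Par x m) (h2 : Par m y) : Par x y := by
  obtain ⟨c, hc⟩ := par_right hm (par_symm h1)
  obtain ⟨c', hc'⟩ := par_right hm h2
  by_cases hc0 : c = 0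
  · exact ⟨0, Or.inr (by rw [hc, hc0, zero_smul, zero_smul])⟩
  · refine ⟨c' * c⁻¹, Or.inl ?_⟩
    rw [hc', hc, smul_smul, mul_assoc, inv_mul_cancel₀ hc0, mul_one]

variable {p : ℕ} {n : Fin p → ℕ}

lemma prod_upd (s : Finset (Fin p)) (w : ∀ i, EuclideanSpace ℂ (Fin (n i)))
    (f : ∀ i, Fin (n i)) {i : Fin p} (hi : i ∈ s) (v : Fin (n i)) :
    ∏ k ∈ s, w k (Function.update f i v k) = w i v * ∏ k ∈ s.erase i, w k (f k) := by
  rw [← Finset.mul_prod_erase s _ hi, Function.update_self]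
  congr 1
  refine Finset.prod_congr rfl fun k hk => ?_
  rw [Function.update_of_ne (Finset.ne_of_mem_erase hk)]

lemma prod_updF (s : Finset (Fin p)) (w : ∀ i, EuclideanSpace ℂ (Fin (n i)))
    (f : ∀ i, Fin (n i)) {i : Fin p} (hi : i ∈ s) (v : EuclideanSpace ℂ (Fin (n i))) :
    ∏ k ∈ s, (Function.update w i v) k (f k) = v (f i) * ∏ k ∈ s.erase i, w k (f k) := by
  rw [← Finset.mul_prod_erase s _ hi, Function.update_self]
  congr 1
  refine Finset.prod_congr rfl fun k hk => ?_
  rw [Function.update_of_ne (Finset.ne_of_mem_erase hk)]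

lemma exists_base {x : ∀ i, EuclideanSpace ℂ (Fin (n i))} (hx : ∀ i, x i ≠ 0) :
    ∃ f : ∀ i, Fin (n i), ∀ i, x i (f i) ≠ 0 := by
  choose f hf using fun i => exists_coord_ne_zero (hx i)
  exact ⟨f, hf⟩

lemma par_of_prod_eq (s : Finset (Fin p)) {x y : ∀ i, EuclideanSpace ℂ (Fin (n i))}
    (hx : ∀ i, x i ≠ 0) (hy : ∀ i, y i ≠ 0) (lam : ℂ)
    (h : ∀ f : ∀ i, Fin (n i), (∏ i ∈ s, y i (f i)) = lam * ∏ i ∈ s, x i (f i))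
    {j : Fin p} (hj : j ∈ s) : Par (x j) (y j) := by
  obtain ⟨f₁, hf₁⟩ := exists_base hx
  obtain ⟨f₂, hf₂⟩ := exists_base hy
  have hX1 : (∏ i ∈ s, x i (f₁ i)) ≠ 0 := Finset.prod_ne_zero_iff.2 fun i _ => hf₁ i
  have hlam : lam ≠ 0 := by
    intro h0
    have h2 := h f₂
    rw [h0, zero_mul] at h2
    exact (Finset.prod_ne_zero_iff.2 fun i _ => hf₂ i) h2
  have hY1 : (∏ i ∈ s, y i (f₁ i)) ≠ 0 := by rw [h f₁]; exact mul_ne_zero hlam hX1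
  have hBne : (∏ k ∈ s.erase j, y k (f₁ k)) ≠ 0 := by
    have h3 : y j (f₁ j) * ∏ k ∈ s.erase j, y k (f₁ k) = ∏ i ∈ s, y i (f₁ i) :=
      Finset.mul_prod_erase s (fun k => y k (f₁ k)) hj
    intro h0
    rw [h0, mul_zero] at h3
    exact hY1 h3.symm
  refine ⟨lam * (∏ k ∈ s.erase j, x k (f₁ k)) / (∏ k ∈ s.erase j, y k (f₁ k)), Or.inl ?_⟩
  ext m
  rw [PiLp.smul_apply, smul_eq_mul]
  have hm := h (Function.update f₁ j m)
  rw [prod_upd s y f₁ hj m, prod_upd s x f₁ hj m] at hm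
  rw [div_mul_eq_mul_div, eq_div_iff hBne]
  linear_combination hm

lemma tensP_ne_zero {x : ∀ i, EuclideanSpace ℂ (Fin (n i))} (hx : ∀ i, x i ≠ 0) :
    tensP x ≠ 0 := by
  obtain ⟨f, hf⟩ := exists_base hx
  intro h0
  have h1 : tensP x f = 0 := by rw [h0]; rfl
  rw [show tensP x f = ∏ i, x i (f i) from rfl] at h1
  exact (Finset.prod_ne_zero_iff.2 fun i _ => hf i) h1

lemma tensP_comp_ne_zero {x : ∀ i, EuclideanSpace ℂ (Fin (n i))} (hx : tensP x ≠ 0) :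
    ∀ i, x i ≠ 0 := by
  intro i h0
  apply hx
  ext f
  exact Finset.prod_eq_zero (Finset.mem_univ i) (by rw [h0]; rfl)

lemma onestep {x y z : ∀ i, EuclideanSpace ℂ (Fin (n i))} {c d e : ℂ}
    (hc : c ≠ 0) (hd : d ≠ 0) (hx : ∀ i, x i ≠ 0) (hy : ∀ i, y i ≠ 0)
    (h : ∀ f : ∀ i, Fin (n i),
      c * ∏ i, x i (f i) + d * ∏ i, y i (f i) = e * ∏ i, z i (f i)) :
    {i : Fin p | ¬ Par (x i) (y i)}.ncard ≤ 1 := by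
  by_contra hcon
  push_neg at hcon
  obtain ⟨i, j, hi, hj, hij⟩ := (Set.one_lt_ncard_iff (Set.toFinite _)).1 hcon
  simp only [Set.mem_setOf_eq] at hi hj
  obtain ⟨s, t, hst⟩ : ∃ s t, x i s * y i t ≠ x i t * y i s := by
    by_contra hmc; push_neg at hmc; exact hi (par_of_minors hmc)
  have hup : ∀ (f : ∀ i, Fin (n i)) (v : Fin (n i)),
      c * (x i v * ∏ k ∈ Finset.univ.erase i, x k (f k))
        + d * (y i v * ∏ k ∈ Finset.univ.erase i, y k (f k))
      = e * (z i v * ∏ k ∈ Finset.univ.erase i, z k (f k)) := by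
    intro f v
    have h1 := h (Function.update f i v)
    rw [prod_upd Finset.univ x f (Finset.mem_univ i) v,
        prod_upd Finset.univ y f (Finset.mem_univ i) v,
        prod_upd Finset.univ z f (Finset.mem_univ i) v] at h1
    exact h1
  have key2 : ∀ f f' : ∀ i, Fin (n i),
      (∏ k ∈ Finset.univ.erase i, x k (f k)) * (∏ k ∈ Finset.univ.erase i, y k (f' k))
      = (∏ k ∈ Finset.univ.erase i, x k (f' k)) * (∏ k ∈ Finset.univ.erase i, y k (f k)) := by
    intro f f'
    have k1 := hup f s
    have k2 := hup f t
    have k3 := hup f' s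
    have k4 := hup f' t
    have hzero : (x i s * y i t - x i t * y i s) *
        (c * d * ((∏ k ∈ Finset.univ.erase i, x k (f k)) * (∏ k ∈ Finset.univ.erase i, y k (f' k))
          - (∏ k ∈ Finset.univ.erase i, x k (f' k)) * (∏ k ∈ Finset.univ.erase i, y k (f k)))) = 0 := by
      linear_combination
        (c * (x i t * ∏ k ∈ Finset.univ.erase i, x k (f' k))
          + d * (y i t * ∏ k ∈ Finset.univ.erase i, y k (f' k))) * k1
        + (e * (z i s * ∏ k ∈ Finset.univ.erase i, z k (f k))) * k4
        - (c * (x i s * ∏ k ∈ Finset.univ.erase i, x k (f' k))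
          + d * (y i s * ∏ k ∈ Finset.univ.erase i, y k (f' k))) * k2
        - (e * (z i t * ∏ k ∈ Finset.univ.erase i, z k (f k))) * k3
    rcases mul_eq_zero.1 hzero with h0 | h0
    · exact absurd (sub_eq_zero.1 h0) hst
    · rcases mul_eq_zero.1 h0 with h1 | h1
      · exact absurd h1 (mul_ne_zero hc hd)
      · exact sub_eq_zero.1 h1
  obtain ⟨f₁, hf₁⟩ := exists_base hx
  have hXf₁ : (∏ k ∈ Finset.univ.erase i, x k (f₁ k)) ≠ 0 :=
    Finset.prod_ne_zero_iff.2 fun k _ => hf₁ k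
  have hYlam : ∀ f : ∀ i, Fin (n i),
      (∏ k ∈ Finset.univ.erase i, y k (f k))
      = ((∏ k ∈ Finset.univ.erase i, y k (f₁ k)) / (∏ k ∈ Finset.univ.erase i, x k (f₁ k)))
        * ∏ k ∈ Finset.univ.erase i, x k (f k) := by
    intro f
    have hk := key2 f₁ f
    rw [div_mul_eq_mul_div, eq_div_iff hXf₁]
    linear_combination hk
  exact hj (par_of_prod_eq (Finset.univ.erase i) hx hy _ hYlam
    (Finset.mem_erase.2 ⟨hij.symm, Finset.mem_univ j⟩))

lemma image_facts (L : EuclideanSpace ℂ (∀ i, Fin (n i)) ≃ₗ[ℂ] EuclideanSpace ℂ (∀ i, Fin (n i)))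
    {x x' : ∀ i, EuclideanSpace ℂ (Fin (n i))} {c : ℂ}
    (hx : ∀ i, x i ≠ 0) (heq : L (tensP x) = c • tensP x') :
    c ≠ 0 ∧ ∀ i, x' i ≠ 0 := by
  have h1 : L (tensP x) ≠ 0 := by
    rw [Ne, LinearEquiv.map_eq_zero_iff]
    exact tensP_ne_zero hx
  rw [heq] at h1
  obtain ⟨hc, ht⟩ := smul_ne_zero_iff.1 h1
  exact ⟨hc, tensP_comp_ne_zero ht⟩

end Aux

lemma main_ind {p : ℕ} {n : Fin p → ℕ}
    (L : EuclideanSpace ℂ (∀ i, Fin (n i)) ≃ₗ[ℂ] EuclideanSpace ℂ (∀ i, Fin (n i)))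
    (h : ∀ x : ∀ i, EuclideanSpace ℂ (Fin (n i)),
      ∃ (c : ℂ) (y : ∀ i, EuclideanSpace ℂ (Fin (n i))), L (tensP x) = c • tensP y) :
    ∀ (r : ℕ) (a b : ∀ i, EuclideanSpace ℂ (Fin (n i)))
      (_ : ∀ i, a i ≠ 0) (_ : ∀ i, b i ≠ 0)
      (_ : {i : Fin p | ¬ Par (a i) (b i)}.ncard ≤ r)
      (c d : ℂ) (a' b' : ∀ i, EuclideanSpace ℂ (Fin (n i)))
      (_ : L (tensP a) = c • tensP a') (_ : L (tensP b) = d • tensP b'),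
      {i : Fin p | ¬ Par (a' i) (b' i)}.ncard ≤ r := by
  intro r
  induction r with
  | zero =>
    intro a b ha hb hr c d a' b' ha' hb'
    obtain ⟨hc, ha'0⟩ := image_facts L ha ha'
    obtain ⟨hd, hb'0⟩ := image_facts L hb hb'
    have hall : ∀ i, Par (a i) (b i) := by
      intro i
      by_contra hi
      have hmem : i ∈ {i : Fin p | ¬ Par (a i) (b i)} := hi
      rw [(Set.ncard_eq_zero (Set.toFinite _)).1 (Nat.le_zero.1 hr)] at hmem
      exact hmem
    choose γ hγ using fun i => par_right (ha i) (hall i)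
    have hγ0 : ∀ i, γ i ≠ 0 := by
      intro i h0
      apply hb i
      rw [hγ i, h0, zero_smul]
    have htb : tensP b = (∏ i, γ i) • tensP a := by
      ext f
      rw [PiLp.smul_apply, smul_eq_mul]
      show (∏ i, b i (f i)) = _ * ∏ i, a i (f i)
      rw [← Finset.prod_mul_distrib]
      refine Finset.prod_congr rfl fun i _ => ?_
      rw [hγ i, PiLp.smul_apply, smul_eq_mul]
    have heq : d • tensP b' = ((∏ i, γ i) * c) • tensP a' := by
      rw [← hb', htb, map_smul, ha', smul_smul]
    have hpt : ∀ f : ∀ i, Fin (n i),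
        (∏ i, b' i (f i)) = ((∏ i, γ i) * c / d) * ∏ i, a' i (f i) := by
      intro f
      have h3 : (d • tensP b') f = (((∏ i, γ i) * c) • tensP a') f := by rw [heq]
      rw [PiLp.smul_apply, smul_eq_mul, PiLp.smul_apply, smul_eq_mul] at h3
      have h2 : d * ∏ i, b' i (f i) = ((∏ i, γ i) * c) * ∏ i, a' i (f i) := h3
      rw [div_mul_eq_mul_div, eq_div_iff hd]
      linear_combination h2
    have hres : ∀ j, Par (a' j) (b' j) := fun j =>
      par_of_prod_eq Finset.univ ha'0 hb'0 _ hpt (Finset.mem_univ j)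
    have hempty : {i : Fin p | ¬ Par (a' i) (b' i)} = ∅ := by
      ext i
      simpa using hres i
    rw [hempty, Set.ncard_empty]
  | succ r ih =>
    intro a b ha hb hr c d a' b' ha' hb'
    obtain ⟨hc, ha'0⟩ := image_facts L ha ha'
    obtain ⟨hd, hb'0⟩ := image_facts L hb hb'
    by_cases hS : {i : Fin p | ¬ Par (a i) (b i)}.ncard ≤ r
    · exact le_trans (ih a b ha hb hS c d a' b' ha' hb') (Nat.le_succ r)
    · have hpos : 0 < {i : Fin p | ¬ Par (a i) (b i)}.ncard := by omega
      obtain ⟨i₀, hi₀⟩ := (Set.ncard_pos (Set.toFinite _)).1 hpos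
      have hi₀' : ¬ Par (a i₀) (b i₀) := hi₀
      set mid := Function.update a i₀ (b i₀) with hmiddef
      have hmid : ∀ i, mid i ≠ 0 := by
        intro i
        by_cases hii : i = i₀
        · subst hii; rw [hmiddef, Function.update_self]; exact hb i
        · rw [hmiddef, Function.update_of_ne hii]; exact ha i
      obtain ⟨c₂, m', hm'⟩ := h mid
      obtain ⟨hc₂, hm'0⟩ := image_facts L hmid hm'
      have hmb : {i : Fin p | ¬ Par (mid i) (b i)}.ncard ≤ r := by
        have hsub : {i : Fin p | ¬ Par (mid i) (b i)} ⊆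
            {i : Fin p | ¬ Par (a i) (b i)} \ {i₀} := by
          intro i hi
          have hi2 : ¬ Par (mid i) (b i) := hi
          by_cases hii : i = i₀
          · subst hii
            exact absurd ⟨1, Or.inl (by rw [hmiddef, Function.update_self, one_smul])⟩ hi2
          · refine ⟨?_, ?_⟩
            · show ¬ Par (a i) (b i)
              rwa [hmiddef, Function.update_of_ne hii] at hi2
            · simpa using hii
        calc {i : Fin p | ¬ Par (mid i) (b i)}.ncard
            ≤ ({i : Fin p | ¬ Par (a i) (b i)} \ {i₀}).ncard :=
              Set.ncard_le_ncard hsub (Set.toFinite _)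
          _ = {i : Fin p | ¬ Par (a i) (b i)}.ncard - 1 :=
              Set.ncard_diff_singleton_of_mem hi₀
          _ ≤ r := by omega
      have h1 := ih mid b hmid hb hmb c₂ d m' b' hm' hb'
      obtain ⟨c₃, z, hz⟩ := h (Function.update a i₀ (a i₀ + b i₀))
      have hsum : tensP a + tensP mid = tensP (Function.update a i₀ (a i₀ + b i₀)) := by
        ext f
        rw [PiLp.add_apply]
        show (∏ i, a i (f i)) + (∏ i, mid i (f i))
          = ∏ i, (Function.update a i₀ (a i₀ + b i₀)) i (f i)
        rw [prod_updF Finset.univ a f (Finset.mem_univ i₀) (a i₀ + b i₀),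
            hmiddef, prod_updF Finset.univ a f (Finset.mem_univ i₀) (b i₀),
            ← Finset.mul_prod_erase Finset.univ (fun k => a k (f k)) (Finset.mem_univ i₀),
            PiLp.add_apply]
        ring
      have hpt : ∀ f : ∀ i, Fin (n i),
          c * ∏ i, a' i (f i) + c₂ * ∏ i, m' i (f i) = c₃ * ∏ i, z i (f i) := by
        intro f
        have h4 : c • tensP a' + c₂ • tensP m' = c₃ • tensP z := by
          rw [← ha', ← hm', ← map_add, hsum, hz]
        have h5 : (c • tensP a' + c₂ • tensP m') f = (c₃ • tensP z) f := by rw [h4]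
        rw [PiLp.add_apply, PiLp.smul_apply, PiLp.smul_apply, PiLp.smul_apply,
            smul_eq_mul, smul_eq_mul, smul_eq_mul] at h5
        exact h5
      have h2 : {i : Fin p | ¬ Par (a' i) (m' i)}.ncard ≤ 1 := onestep hc hc₂ ha'0 hm'0 hpt
      have hsub2 : {i : Fin p | ¬ Par (a' i) (b' i)} ⊆
          {i : Fin p | ¬ Par (a' i) (m' i)} ∪ {i : Fin p | ¬ Par (m' i) (b' i)} := by
        intro i hi
        by_contra hni
        simp only [Set.mem_union, Set.mem_setOf_eq, not_or, not_not] at hni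
        exact hi (par_trans_mid (hm'0 i) hni.1 hni.2)
      calc {i : Fin p | ¬ Par (a' i) (b' i)}.ncard
          ≤ ({i : Fin p | ¬ Par (a' i) (m' i)} ∪ {i : Fin p | ¬ Par (m' i) (b' i)}).ncard :=
            Set.ncard_le_ncard hsub2 (Set.toFinite _)
        _ ≤ {i : Fin p | ¬ Par (a' i) (m' i)}.ncard + {i : Fin p | ¬ Par (m' i) (b' i)}.ncard :=
            Set.ncard_union_le _ _
        _ ≤ r + 1 := by omega


/-- If an invertible `L` maps elementary tensors to multiples of elementary tensors, and
`a`, `b` are elementary tensors (with nonzero components) differing on exactly `r`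
tensor factors, then `La` and `Lb`, written as multiples of elementary tensors, differ
on at most `r` tensor factors. -/
theorem stmt15 {p : ℕ} {n : Fin p → ℕ} {r : ℕ}
    (L : EuclideanSpace ℂ (∀ i, Fin (n i)) ≃ₗ[ℂ] EuclideanSpace ℂ (∀ i, Fin (n i)))
    (h : ∀ x : ∀ i, EuclideanSpace ℂ (Fin (n i)),
      ∃ (c : ℂ) (y : ∀ i, EuclideanSpace ℂ (Fin (n i))), L (tensP x) = c • tensP y)
    (a b : ∀ i, EuclideanSpace ℂ (Fin (n i)))
    (ha : ∀ i, a i ≠ 0) (hb : ∀ i, b i ≠ 0)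
    (hr : {i : Fin p | ¬ Par (a i) (b i)}.ncard = r)
    (c d : ℂ) (a' b' : ∀ i, EuclideanSpace ℂ (Fin (n i)))
    (ha' : L (tensP a) = c • tensP a') (hb' : L (tensP b) = d • tensP b') :
    {i : Fin p | ¬ Par (a' i) (b' i)}.ncard ≤ r := by
  exact main_ind L h r a b ha hb (le_of_eq hr) c d a' b' ha' hb'
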